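/- arXiv:1804.10556 — 2 statements merged into one kernel-verified Lean document; each statement's English description precedes it below -/
import Mathlib

section
/- Let (X, ‖·‖) be a normed space and p ≥ 1. For x = (x_1,...,x_n) and x' = (x_1',...,x_n') in X^n, let μ̂_x and μ̂_{x'} be the empirical measures placing mass 1/n at each x_i and x_i' respectively. Then for any probability measure μ, |W_p(μ̂_x, μ) − W_p(μ̂_{x'}, μ)| ≤ n^{−1/max(2,p)} · (∑_{i=1}^n ‖x_i − x_i'‖²)^{1/2}. In particular, x ↦ W_p(μ̂_x, μ) is n^{−1/max(2,p)}-Lipschitz with respect to the ℓ² product norm on X^n. -/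
open MeasureTheory
open scoped ENNReal

/-- The Wasserstein distance of order `p` on a normed space: the infimum over all
couplings `ξ` of `μ` and `ν` of `(∫ ‖x − y‖^p dξ)^{1/p}`. -/
noncomputable def wassersteinDist {E : Type*} [NormedAddCommGroup E] [MeasurableSpace E]
    (p : ℝ) (μ ν : Measure E) : ℝ :=
  ((⨅ ξ ∈ {ξ : Measure (E × E) | ξ.map Prod.fst = μ ∧ ξ.map Prod.snd = ν},
      ∫⁻ q, ENNReal.ofReal (‖q.1 - q.2‖ ^ p) ∂ξ) ^ (1 / p)).toReal

/-- The empirical measure of an `n`-tuple of points: mass `1/n` at each `x i`. -/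
noncomputable def empiricalMeasure {E : Type*} [MeasurableSpace E] {n : ℕ}
    (x : Fin n → E) : Measure E :=
  (n : ℝ≥0∞)⁻¹ • ∑ i, Measure.dirac (x i)

section Aux

lemma real_bound (p : ℝ) (hp : 1 ≤ p) {n : ℕ} (hn : 0 < n) (a : Fin n → ℝ) (ha : ∀ i, 0 ≤ a i) :
    ((n : ℝ)⁻¹ * ∑ i, a i ^ p) ^ (1/p) ≤ (n : ℝ) ^ (-(1 / max 2 p)) * Real.sqrt (∑ i, a i ^ 2) := by
  have hp0 : 0 < p := lt_of_lt_of_le one_pos hp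
  have hn0 : (0:ℝ) < n := by exact_mod_cast hn
  have hsum2 : (0:ℝ) ≤ ∑ i, a i ^ 2 := Finset.sum_nonneg fun i _ => sq_nonneg _
  have hsqrt : Real.sqrt (∑ i, a i ^ 2) = (∑ i, a i ^ 2) ^ (1/2 : ℝ) := by
    rw [Real.sqrt_eq_rpow]
  have hinv : (0:ℝ) ≤ (n:ℝ)⁻¹ := by positivity
  have hsump : (0:ℝ) ≤ ∑ i, a i ^ p := Finset.sum_nonneg fun i _ => Real.rpow_nonneg (ha i) p
  have htn : ∀ i ∈ Finset.univ, (0:ℝ) ≤ (n:ℝ)⁻¹ * a i ^ p :=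
    fun i _ => mul_nonneg hinv (Real.rpow_nonneg (ha i) p)
  rcases le_total p 2 with hp2 | hp2
  · -- p ≤ 2
    rw [max_eq_left hp2, hsqrt]
    have hneg : (n:ℝ) ^ (-(1/2) : ℝ) = ((n:ℝ)⁻¹) ^ (1/2 : ℝ) := by
      rw [Real.rpow_neg (le_of_lt hn0), ← Real.inv_rpow (le_of_lt hn0)]
    rw [hneg, ← Real.mul_rpow hinv hsum2]
    have key : ((∑ i, (n:ℝ)⁻¹ * a i ^ p)) ^ (2/p : ℝ) ≤ ∑ i, (n:ℝ)⁻¹ * a i ^ 2 := by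
      have := Real.rpow_arith_mean_le_arith_mean_rpow Finset.univ (fun _ => (n:ℝ)⁻¹)
        (fun i => a i ^ p) (fun i _ => hinv)
        (by rw [Finset.sum_const, Finset.card_univ, Fintype.card_fin, nsmul_eq_mul,
            mul_inv_cancel₀ hn0.ne'])
        (fun i _ => Real.rpow_nonneg (ha i) p)
        (p := 2/p) (by rw [le_div_iff₀ hp0]; linarith)
      refine this.trans_eq (Finset.sum_congr rfl fun i _ => ?_)
      rw [← Real.rpow_natCast (a i) 2, ← Real.rpow_mul (ha i)]
      congr 1
      push_cast
      field_simp
    have h2 := Real.rpow_le_rpow (Real.rpow_nonneg (Finset.sum_nonneg htn) _)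
      key (by norm_num : (0:ℝ) ≤ 1/2)
    rw [← Real.rpow_mul (Finset.sum_nonneg htn)] at h2
    have h1 : (2/p) * (1/2 : ℝ) = 1/p := by field_simp
    rw [h1] at h2
    calc ((n:ℝ)⁻¹ * ∑ i, a i ^ p) ^ (1/p) = (∑ i, (n:ℝ)⁻¹ * a i ^ p) ^ (1/p) := by
          rw [Finset.mul_sum]
      _ ≤ (∑ i, (n:ℝ)⁻¹ * a i ^ 2) ^ (1/2 : ℝ) := h2
      _ = ((n:ℝ)⁻¹ * ∑ i, a i ^ 2) ^ (1/2 : ℝ) := by rw [Finset.mul_sum]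
  · -- 2 ≤ p
    rw [max_eq_right hp2, hsqrt]
    have hneg : (n:ℝ) ^ (-(1/p) : ℝ) = ((n:ℝ)⁻¹) ^ (1/p : ℝ) := by
      rw [Real.rpow_neg (le_of_lt hn0), ← Real.inv_rpow (le_of_lt hn0)]
    rw [hneg, Real.mul_rpow hinv hsump]
    gcongr ?_ * ?_
    set S := ∑ i, a i ^ 2 with hS
    rcases eq_or_lt_of_le hsum2 with hS0 | hS0
    · have hz : ∀ i, a i = 0 := fun i => by
        have h := (Finset.sum_eq_zero_iff_of_nonneg (fun i (_ : i ∈ Finset.univ) => sq_nonneg (a i))).1 hS0.symm i (Finset.mem_univ i)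
        nlinarith [sq_nonneg (a i)]
      have hzero : ∑ i, a i ^ p = 0 :=
        Finset.sum_eq_zero fun i _ => by rw [hz i, Real.zero_rpow hp0.ne']
      rw [hzero, Real.zero_rpow (one_div_ne_zero hp0.ne')]
      exact Real.rpow_nonneg hsum2 _
    · have hkey : ∑ i, a i ^ p ≤ S ^ (p/2 : ℝ) := by
        have hterm : ∀ i, a i ^ p ≤ a i ^ 2 * (S ^ ((1:ℝ)/2)) ^ (p - 2) := by
          intro i
          rcases eq_or_lt_of_le (ha i) with h0 | h0
          · rw [← h0, Real.zero_rpow hp0.ne']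
            have : ((0:ℝ)) ^ 2 = 0 := by norm_num
            rw [this, zero_mul]
          · have hale : a i ≤ S ^ ((1:ℝ)/2) := by
              have h2 : a i ^ (2:ℕ) ≤ S := Finset.single_le_sum (fun i _ => sq_nonneg (a i)) (Finset.mem_univ i)
              have h3 := Real.rpow_le_rpow (by positivity) h2 (by norm_num : (0:ℝ) ≤ 1/2)
              rwa [← Real.rpow_natCast (a i) 2, ← Real.rpow_mul (ha i),
                (by norm_num : ((2:ℕ):ℝ) * (1/2 : ℝ) = 1), Real.rpow_one] at h3
            calc a i ^ p = a i ^ ((2:ℝ) + (p - 2)) := by norm_num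
              _ = a i ^ (2:ℝ) * a i ^ (p - 2) := Real.rpow_add h0 _ _
              _ ≤ a i ^ (2:ℝ) * (S ^ ((1:ℝ)/2)) ^ (p - 2) := by
                  exact mul_le_mul_of_nonneg_left
                    (Real.rpow_le_rpow (ha i) hale (by linarith)) (Real.rpow_nonneg (ha i) 2)
              _ = a i ^ 2 * (S ^ ((1:ℝ)/2)) ^ (p - 2) := by
                  rw [show ((2:ℝ)) = ((2:ℕ):ℝ) by norm_num, Real.rpow_natCast]
        calc ∑ i, a i ^ p ≤ ∑ i, a i ^ 2 * (S ^ ((1:ℝ)/2)) ^ (p - 2) :=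
              Finset.sum_le_sum fun i _ => hterm i
          _ = S * (S ^ ((1:ℝ)/2)) ^ (p - 2) := by rw [← Finset.sum_mul]
          _ = S ^ ((1:ℝ)/2 * (p-2) + 1) := by
              rw [← Real.rpow_mul hsum2, Real.rpow_add hS0, Real.rpow_one, mul_comm]
          _ = S ^ (p/2 : ℝ) := by ring_nf
      have h4 := Real.rpow_le_rpow hsump hkey (by positivity : (0:ℝ) ≤ 1/p)
      rwa [← Real.rpow_mul hsum2, (by field_simp : (p/2) * (1/p : ℝ) = 1/2)] at h4

variable {E : Type*} [NormedAddCommGroup E] [NormedSpace ℝ E] [MeasurableSpace E] [BorelSpace E]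

lemma ofReal_norm_rpow {p : ℝ} (hp0 : 0 ≤ p) (a b : E) :
    ENNReal.ofReal (‖a - b‖ ^ p) = edist a b ^ p := by
  rw [← ENNReal.ofReal_rpow_of_nonneg (norm_nonneg _) hp0, ofReal_norm,
    edist_eq_enorm_sub]

lemma exists_coupling (p : ℝ) (hp : 1 ≤ p) {n : ℕ} (hn : 0 < n)
    (x x' : Fin n → E) (μ : Measure E) [IsProbabilityMeasure μ]
    (ξ : Measure (E × E)) (h1 : ξ.map Prod.fst = empiricalMeasure x')
    (h2 : ξ.map Prod.snd = μ) :
    ∃ ξ' : Measure (E × E), ξ'.map Prod.fst = empiricalMeasure x ∧ ξ'.map Prod.snd = μ ∧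
      (∫⁻ q, ENNReal.ofReal (‖q.1 - q.2‖ ^ p) ∂ξ') ^ (1/p)
        ≤ ((n : ℝ≥0∞)⁻¹ * ∑ i, (edist (x i) (x' i)) ^ p) ^ (1/p)
          + (∫⁻ q, ENNReal.ofReal (‖q.1 - q.2‖ ^ p) ∂ξ) ^ (1/p) := by
  classical
  have hp0 : 0 < p := lt_of_lt_of_le one_pos hp
  have hnE : ((n : ℝ≥0∞)) ≠ 0 := by exact_mod_cast hn.ne'
  have hnT : ((n : ℝ≥0∞)) ≠ ⊤ := ENNReal.natCast_ne_top n
  have hSm : ∀ i : Fin n, MeasurableSet (({x' i} ×ˢ Set.univ : Set (E × E))) := fun i =>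
    (measurableSet_singleton _).prod MeasurableSet.univ
  have hSpre : ∀ i : Fin n, ({x' i} ×ˢ Set.univ : Set (E × E)) = Prod.fst ⁻¹' {x' i} := by
    intro i; ext q; simp [Set.mem_prod, Prod.ext_iff, eq_comm]
  set c : Fin n → ℕ := fun i => (Finset.univ.filter (fun j => x' j = x' i)).card with hc
  have hcpos : ∀ i, 0 < c i := fun i => Finset.card_pos.2 ⟨i, by simp [hc]⟩
  have hcE : ∀ i, ((c i : ℝ≥0∞)) ≠ 0 := fun i => by exact_mod_cast (hcpos i).ne'
  have hcT : ∀ i, ((c i : ℝ≥0∞)) ≠ ⊤ := fun i => ENNReal.natCast_ne_top _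
  have hm : ∀ i, ξ ({x' i} ×ˢ Set.univ) = (n : ℝ≥0∞)⁻¹ * (c i : ℝ≥0∞) := by
    intro i
    rw [hSpre i, ← Measure.map_apply measurable_fst (measurableSet_singleton _), h1,
      empiricalMeasure, Measure.smul_apply, Measure.finset_sum_apply, smul_eq_mul]
    congr 1
    have hd : ∀ j, Measure.dirac (x' j) ({x' i} : Set E)
        = if x' j = x' i then (1:ℝ≥0∞) else 0 := by
      intro j
      rw [Measure.dirac_apply' _ (measurableSet_singleton _)]
      by_cases h : x' j = x' i <;> simp [h]
    simp_rw [hd]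
    rw [Finset.sum_boole]
  have hmne : ∀ i, ξ ({x' i} ×ˢ Set.univ) ≠ 0 := by
    intro i; rw [hm i]
    exact mul_ne_zero (ENNReal.inv_ne_zero.2 hnT) (hcE i)
  have hmnetop : ∀ i, ξ ({x' i} ×ˢ Set.univ) ≠ ⊤ := by
    intro i; rw [hm i]
    exact ENNReal.mul_ne_top (ENNReal.inv_ne_top.2 hnE) (hcT i)
  have hcoef : ∀ i, (n : ℝ≥0∞)⁻¹ * (ξ ({x' i} ×ˢ Set.univ))⁻¹ = ((c i : ℝ≥0∞))⁻¹ := by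
    intro i
    rw [hm i, ENNReal.mul_inv (Or.inl (ENNReal.inv_ne_zero.2 hnT))
      (Or.inl (ENNReal.inv_ne_top.2 hnE)), inv_inv, ← mul_assoc,
      ENNReal.inv_mul_cancel hnE hnT, one_mul]
  -- the fiber summation lemma
  have hkey : ∀ h : E × E → ℝ≥0∞,
      ∑ i, ((c i : ℝ≥0∞))⁻¹ * ∫⁻ q in ({x' i} ×ˢ Set.univ : Set (E × E)), h q ∂ξ
        = ∫⁻ q, h q ∂ξ := by
    intro h
    set T : Finset E := Finset.univ.image x' with hT
    -- rewrite as a sum over fibers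
    have step1 : ∑ i, ((c i : ℝ≥0∞))⁻¹ * ∫⁻ q in ({x' i} ×ˢ Set.univ : Set (E × E)), h q ∂ξ
        = ∑ z ∈ T, ∫⁻ q in ({z} ×ˢ Set.univ : Set (E × E)), h q ∂ξ := by
      have := Finset.sum_comp (s := Finset.univ)
        (fun z : E => (((Finset.univ.filter (fun j => x' j = z)).card : ℝ≥0∞))⁻¹
          * ∫⁻ q in ({z} ×ˢ Set.univ : Set (E × E)), h q ∂ξ) x'
      rw [this]
      refine Finset.sum_congr rfl fun z hz => ?_
      obtain ⟨i, _, rfl⟩ := Finset.mem_image.1 hz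
      rw [nsmul_eq_mul, ← mul_assoc]
      have hfilter : (Finset.univ.filter (fun j => x' j = x' i)).card = c i := rfl
      rw [hfilter, ENNReal.mul_inv_cancel (hcE i) (hcT i), one_mul]
    rw [step1]
    have step2 : ∑ z ∈ T, ∫⁻ q in ({z} ×ˢ Set.univ : Set (E × E)), h q ∂ξ
        = ∫⁻ q in (⋃ z ∈ T, ({z} ×ˢ Set.univ : Set (E × E))), h q ∂ξ := by
      rw [lintegral_biUnion_finset ?_ (fun z _ => (measurableSet_singleton _).prod MeasurableSet.univ)]
      intro z hz w hw hzw
      simp only [Function.onFun, Set.disjoint_left]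
      rintro ⟨a, b⟩ ha hb
      simp only [Set.mem_prod, Set.mem_singleton_iff] at ha hb
      exact hzw (ha.1 ▸ hb.1 ▸ rfl)
    rw [step2]
    have hTuniv : (⋃ z ∈ T, ({z} ×ˢ Set.univ : Set (E × E))) = (↑T : Set E) ×ˢ Set.univ := by
      ext q; simp [Set.mem_prod, Prod.ext_iff, eq_comm]
    rw [hTuniv]
    have hTm : MeasurableSet ((↑T : Set E) ×ˢ (Set.univ : Set E)) :=
      (T.measurableSet).prod MeasurableSet.univ
    have hcompl : ξ (((↑T : Set E) ×ˢ (Set.univ : Set E))ᶜ) = 0 := by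
      have hcs : (((↑T : Set E) ×ˢ (Set.univ : Set E))ᶜ) = Prod.fst ⁻¹' ((↑T : Set E)ᶜ) := by
        ext q; simp [Set.mem_prod]
      rw [hcs, ← Measure.map_apply measurable_fst (T.measurableSet.compl), h1,
        empiricalMeasure, Measure.smul_apply, Measure.finset_sum_apply, smul_eq_mul]
      have : ∀ j ∈ Finset.univ, Measure.dirac (x' j) ((↑T : Set E)ᶜ) = 0 := by
        intro j _
        rw [Measure.dirac_apply' _ T.measurableSet.compl]
        simp [hT]
      rw [Finset.sum_congr rfl this]
      simp
    rw [← lintegral_add_compl h hTm (μ := ξ), setLIntegral_measure_zero _ _ hcompl, add_zero]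
  -- conditional measures
  set ν : Fin n → Measure E := fun i =>
    (ξ ({x' i} ×ˢ Set.univ))⁻¹ • (ξ.restrict ({x' i} ×ˢ Set.univ)).map Prod.snd with hν
  have hν_apply : ∀ i, ∀ A : Set E, MeasurableSet A →
      ν i A = (ξ ({x' i} ×ˢ Set.univ))⁻¹ * ξ ((Set.univ ×ˢ A) ∩ ({x' i} ×ˢ Set.univ)) := by
    intro i A hA
    rw [hν]
    simp only [Measure.smul_apply, smul_eq_mul]
    rw [Measure.map_apply measurable_snd hA, Measure.restrict_apply (measurable_snd hA)]
    congr 2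
    ext q; simp [Set.mem_prod]
  have hν_univ : ∀ i, ν i Set.univ = 1 := by
    intro i
    rw [hν_apply i _ MeasurableSet.univ]
    have huu : (Set.univ ×ˢ (Set.univ : Set E)) ∩ ({x' i} ×ˢ Set.univ) = {x' i} ×ˢ Set.univ := by
      ext q; simp [Set.mem_prod]
    rw [huu, ENNReal.inv_mul_cancel (hmne i) (hmnetop i)]
  have hν_lint : ∀ i, ∀ f : E → ℝ≥0∞, Measurable f →
      ∫⁻ y, f y ∂(ν i) = (ξ ({x' i} ×ˢ Set.univ))⁻¹
        * ∫⁻ q in ({x' i} ×ˢ Set.univ : Set (E × E)), f q.2 ∂ξ := by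
    intro i f hf
    rw [hν]
    simp only [lintegral_smul_measure]
    rw [lintegral_map hf measurable_snd, smul_eq_mul]
  -- the transported coupling
  set ξ' : Measure (E × E) :=
    (n : ℝ≥0∞)⁻¹ • ∑ i, (ν i).map (fun y => (x i, y)) with hξ'
  refine ⟨ξ', ?_, ?_, ?_⟩
  · -- first marginal
    ext A hA
    rw [Measure.map_apply measurable_fst hA, hξ']
    simp only [Measure.smul_apply, smul_eq_mul]
    rw [Measure.finset_sum_apply]
    rw [empiricalMeasure, Measure.smul_apply, Measure.finset_sum_apply, smul_eq_mul]
    congr 1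
    refine Finset.sum_congr rfl fun i _ => ?_
    rw [Measure.map_apply measurable_prodMk_left (measurable_fst hA)]
    have : (fun y => (x i, y)) ⁻¹' (Prod.fst ⁻¹' A) = if x i ∈ A then Set.univ else (∅ : Set E) := by
      by_cases h : x i ∈ A <;> · ext y; simp [h]
    rw [this, Measure.dirac_apply' _ hA]
    by_cases h : x i ∈ A
    · simp [h, hν_univ i]
    · simp [h]
  · -- second marginal
    ext A hA
    rw [Measure.map_apply measurable_snd hA, hξ']
    simp only [Measure.smul_apply, smul_eq_mul]
    rw [Measure.finset_sum_apply]
    have hpre : ∀ i : Fin n, (fun y => (x i, y)) ⁻¹' (Prod.snd ⁻¹' A) = A := by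
      intro i; ext y; simp
    have : ∀ i ∈ Finset.univ, ((ν i).map (fun y => (x i, y))) (Prod.snd ⁻¹' A)
        = ν i A := by
      intro i _
      rw [Measure.map_apply measurable_prodMk_left (measurable_snd hA), hpre]
    rw [Finset.sum_congr rfl this]
    -- now show n⁻¹ * ∑ ν i A = μ A
    have hform : ∀ i ∈ Finset.univ, ν i A
        = (ξ ({x' i} ×ˢ Set.univ))⁻¹ * ξ ((Set.univ ×ˢ A) ∩ ({x' i} ×ˢ Set.univ)) :=
      fun i _ => hν_apply i A hA
    rw [Finset.sum_congr rfl hform, Finset.mul_sum]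
    have hterm : ∀ i ∈ Finset.univ, (n : ℝ≥0∞)⁻¹ * ((ξ ({x' i} ×ˢ Set.univ))⁻¹
          * ξ ((Set.univ ×ˢ A) ∩ ({x' i} ×ˢ Set.univ)))
        = ((c i : ℝ≥0∞))⁻¹ * ∫⁻ q in ({x' i} ×ˢ Set.univ : Set (E × E)),
            (Set.univ ×ˢ A).indicator (fun _ => (1:ℝ≥0∞)) q ∂ξ := by
      intro i _
      rw [← mul_assoc, hcoef i]
      congr 1
      rw [lintegral_indicator (MeasurableSet.univ.prod hA), Measure.restrict_restrict
        (MeasurableSet.univ.prod hA)]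
      simp
    rw [Finset.sum_congr rfl hterm, hkey _]
    rw [lintegral_indicator (MeasurableSet.univ.prod hA)]
    simp only [lintegral_const, one_mul, Measure.restrict_apply MeasurableSet.univ,
      Set.univ_inter]
    have : (Set.univ ×ˢ A : Set (E × E)) = Prod.snd ⁻¹' A := by ext q; simp
    rw [this, ← Measure.map_apply measurable_snd hA, h2]
  · -- cost bound
    simp_rw [ofReal_norm_rpow hp0.le]
    set a : Fin n → ℝ≥0∞ := fun i => edist (x i) (x' i) with ha
    set b : Fin n → ℝ≥0∞ := fun i => (∫⁻ y, edist (x' i) y ^ p ∂(ν i)) ^ (1/p) with hb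
    -- cost of ξ' as a sum
    have hcost' : ∫⁻ q, edist q.1 q.2 ^ p ∂ξ'
        = (n : ℝ≥0∞)⁻¹ * ∑ i, ∫⁻ y, edist (x i) y ^ p ∂(ν i) := by
      rw [hξ', lintegral_smul_measure, lintegral_finset_sum_measure]
      congr 1
      refine Finset.sum_congr rfl fun i _ => ?_
      have hae : ∀ᵐ q ∂((ν i).map (fun y => (x i, y))), q.1 = x i := by
        rw [ae_iff]
        have hset : {q : E × E | ¬ q.1 = x i} = Prod.fst ⁻¹' ({x i}ᶜ : Set E) := by
          ext q; simp
        rw [hset, Measure.map_apply measurable_prodMk_left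
          (measurable_fst (measurableSet_singleton (x i)).compl)]
        have hemp : (Prod.mk (x i)) ⁻¹' (Prod.fst ⁻¹' ({x i}ᶜ : Set E)) = (∅ : Set E) := by
          ext y; simp
        rw [hemp, measure_empty]
      have hcongr : ∫⁻ q, edist q.1 q.2 ^ p ∂((ν i).map (fun y => (x i, y)))
          = ∫⁻ q, edist (x i) q.2 ^ p ∂((ν i).map (fun y => (x i, y))) :=
        lintegral_congr_ae (hae.mono fun q hq => by simp only [hq])
      rw [hcongr, lintegral_map (f := fun q : E × E => edist (x i) q.2 ^ p)
        (((ENNReal.continuous_rpow_const.comp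
          (continuous_const.edist continuous_id)).measurable).comp measurable_snd)
        measurable_prodMk_left]
    -- per-index Minkowski
    have hper : ∀ i, ∫⁻ y, edist (x i) y ^ p ∂(ν i) ≤ (a i + b i) ^ p := by
      intro i
      have htri : ∫⁻ y, edist (x i) y ^ p ∂(ν i)
          ≤ ∫⁻ y, (edist (x i) (x' i) + edist (x' i) y) ^ p ∂(ν i) :=
        lintegral_mono fun y => ENNReal.rpow_le_rpow (edist_triangle _ _ _) hp0.le
      have hmink := ENNReal.lintegral_Lp_add_le (μ := ν i)
        (f := fun _ => edist (x i) (x' i)) (g := fun y => edist (x' i) y)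
        measurable_const.aemeasurable
        ((continuous_const.edist continuous_id).measurable.aemeasurable) hp
      simp only [Pi.add_apply] at hmink
      have hconst : ((∫⁻ _, edist (x i) (x' i) ^ p ∂(ν i)) : ℝ≥0∞) ^ (1/p) = a i := by
        rw [lintegral_const, hν_univ i, mul_one, ← ENNReal.rpow_mul,
          mul_one_div_cancel hp0.ne', ENNReal.rpow_one, ha]
      rw [hconst] at hmink
      have := ENNReal.rpow_le_rpow hmink hp0.le
      rw [← ENNReal.rpow_mul, one_div_mul_cancel hp0.ne', ENNReal.rpow_one] at this
      exact htri.trans this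
    -- identify n⁻¹ ∑ b^p with the cost of ξ
    have hbp : ∀ i, b i ^ p = ∫⁻ y, edist (x' i) y ^ p ∂(ν i) := by
      intro i
      rw [hb, ← ENNReal.rpow_mul, one_div_mul_cancel hp0.ne', ENNReal.rpow_one]
    have hcostb : (n : ℝ≥0∞)⁻¹ * ∑ i, b i ^ p = ∫⁻ q, edist q.1 q.2 ^ p ∂ξ := by
      have hterm : ∀ i ∈ Finset.univ, (n : ℝ≥0∞)⁻¹ * b i ^ p
          = ((c i : ℝ≥0∞))⁻¹ * ∫⁻ q in ({x' i} ×ˢ Set.univ : Set (E × E)),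
              edist q.1 q.2 ^ p ∂ξ := by
        intro i _
        rw [hbp i, hν_lint i (fun y => edist (x' i) y ^ p)
          (by exact (ENNReal.continuous_rpow_const.comp
            (continuous_const.edist continuous_id)).measurable)]
        rw [← mul_assoc, hcoef i]
        congr 1
        refine setLIntegral_congr_fun (hSm i) (fun q hq => ?_)
        have : q.1 = x' i := by
          simp only [Set.mem_prod, Set.mem_singleton_iff] at hq
          exact hq.1
        rw [this]
      rw [Finset.mul_sum, Finset.sum_congr rfl hterm, hkey _]
    -- put it all together via the discrete Minkowski inequality
    set w : ℝ≥0∞ := ((n : ℝ≥0∞)⁻¹) ^ (1/p) with hw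
    have hwp : w ^ p = (n : ℝ≥0∞)⁻¹ := by
      rw [hw, ← ENNReal.rpow_mul, one_div_mul_cancel hp0.ne', ENNReal.rpow_one]
    have hstep : ∫⁻ q, edist q.1 q.2 ^ p ∂ξ' ≤ ∑ i, (w * a i + w * b i) ^ p := by
      rw [hcost']
      have : ∀ i ∈ Finset.univ, (w * a i + w * b i) ^ p = (n : ℝ≥0∞)⁻¹ * (a i + b i) ^ p := by
        intro i _
        rw [← mul_add, ENNReal.mul_rpow_of_nonneg _ _ hp0.le, hwp]
      rw [Finset.sum_congr rfl this, ← Finset.mul_sum]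
      exact mul_le_mul_right (Finset.sum_le_sum fun i _ => hper i) _
    have hmink2 := ENNReal.Lp_add_le (s := Finset.univ)
      (f := fun i => w * a i) (g := fun i => w * b i) hp
    have hfa : (∑ i, (w * a i) ^ p) ^ (1/p) = ((n : ℝ≥0∞)⁻¹ * ∑ i, a i ^ p) ^ (1/p) := by
      congr 1
      simp_rw [ENNReal.mul_rpow_of_nonneg _ _ hp0.le, hwp]
      rw [← Finset.mul_sum]
    have hfb : (∑ i, (w * b i) ^ p) ^ (1/p) = (∫⁻ q, edist q.1 q.2 ^ p ∂ξ) ^ (1/p) := by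
      rw [← hcostb]
      congr 1
      simp_rw [ENNReal.mul_rpow_of_nonneg _ _ hp0.le, hwp]
      rw [← Finset.mul_sum]
    calc (∫⁻ q, edist q.1 q.2 ^ p ∂ξ') ^ (1/p)
        ≤ (∑ i, (w * a i + w * b i) ^ p) ^ (1/p) := ENNReal.rpow_le_rpow hstep (by positivity)
      _ ≤ (∑ i, (w * a i) ^ p) ^ (1/p) + (∑ i, (w * b i) ^ p) ^ (1/p) := hmink2
      _ = ((n : ℝ≥0∞)⁻¹ * ∑ i, a i ^ p) ^ (1/p) + (∫⁻ q, edist q.1 q.2 ^ p ∂ξ) ^ (1/p) := by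
          rw [hfa, hfb]

lemma iInf_rpow_aux {ι : Sort*} (f : ι → ℝ≥0∞) {q : ℝ} (hq : 0 < q) :
    (⨅ i, f i) ^ q = ⨅ i, f i ^ q := by
  refine le_antisymm (le_iInf fun i => ENNReal.rpow_le_rpow (iInf_le _ _) hq.le) ?_
  have h2 : ((⨅ i, f i ^ q) ^ (1/q)) ≤ ⨅ i, f i := by
    refine le_iInf fun i => ?_
    have := ENNReal.rpow_le_rpow (iInf_le (fun i => f i ^ q) i)
      (by positivity : (0:ℝ) ≤ 1/q)
    rwa [← ENNReal.rpow_mul, mul_one_div_cancel hq.ne', ENNReal.rpow_one] at this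
  have h3 := ENNReal.rpow_le_rpow h2 hq.le
  rwa [← ENNReal.rpow_mul, one_div_mul_cancel hq.ne', ENNReal.rpow_one] at h3


end Aux

/-- Lipschitz property of the empirical Wasserstein distance:
for `n`-tuples `x, x'` in a normed space,
`|W_p(μ̂_x, μ) − W_p(μ̂_{x'}, μ)| ≤ n^{−1/max(2,p)} (∑ ‖x_i − x_i'‖²)^{1/2}`,
i.e. `x ↦ W_p(μ̂_x, μ)` is `n^{−1/max(2,p)}`-Lipschitz for the ℓ² product norm. -/
theorem wasserstein_empirical_lipschitz
    {E : Type*} [NormedAddCommGroup E] [NormedSpace ℝ E] [MeasurableSpace E] [BorelSpace E]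
    (p : ℝ) (hp : 1 ≤ p) {n : ℕ} (hn : 0 < n)
    (x x' : Fin n → E) (μ : Measure E) [IsProbabilityMeasure μ] :
    |wassersteinDist p (empiricalMeasure x) μ - wassersteinDist p (empiricalMeasure x') μ|
      ≤ (n : ℝ) ^ (-(1 / max 2 p)) * Real.sqrt (∑ i, ‖x i - x' i‖ ^ 2) := by
  classical
  have hp0 : 0 < p := lt_of_lt_of_le one_pos hp
  have hq : (0:ℝ) < 1/p := by positivity
  -- triangle inequality for the infimum costs
  have htri : ∀ y y' : Fin n → E,
      (⨅ ξ ∈ {ξ : Measure (E × E) |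
          ξ.map Prod.fst = empiricalMeasure y ∧ ξ.map Prod.snd = μ},
        ∫⁻ q, ENNReal.ofReal (‖q.1 - q.2‖ ^ p) ∂ξ) ^ (1/p)
      ≤ ((n : ℝ≥0∞)⁻¹ * ∑ i, (edist (y i) (y' i)) ^ p) ^ (1/p)
        + (⨅ ξ ∈ {ξ : Measure (E × E) |
            ξ.map Prod.fst = empiricalMeasure y' ∧ ξ.map Prod.snd = μ},
          ∫⁻ q, ENNReal.ofReal (‖q.1 - q.2‖ ^ p) ∂ξ) ^ (1/p) := by
    intro y y'
    have hcomm : (⨅ ξ ∈ {ξ : Measure (E × E) |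
          ξ.map Prod.fst = empiricalMeasure y' ∧ ξ.map Prod.snd = μ},
        ∫⁻ q, ENNReal.ofReal (‖q.1 - q.2‖ ^ p) ∂ξ) ^ (1/p)
        = ⨅ ξ ∈ {ξ : Measure (E × E) |
            ξ.map Prod.fst = empiricalMeasure y' ∧ ξ.map Prod.snd = μ},
          (∫⁻ q, ENNReal.ofReal (‖q.1 - q.2‖ ^ p) ∂ξ) ^ (1/p) := by
      rw [iInf_rpow_aux _ hq]
      exact iInf_congr fun ξ => iInf_rpow_aux _ hq
    rw [hcomm, ENNReal.add_iInf]
    rw [iInf_congr fun ξ : Measure (E × E) => (ENNReal.add_iInf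
      (a := ((n : ℝ≥0∞)⁻¹ * ∑ i, (edist (y i) (y' i)) ^ p) ^ (1/p)))]
    refine le_iInf fun ξ => le_iInf fun hξ => ?_
    obtain ⟨ξ', hf, hs, hle⟩ := exists_coupling p hp hn y y' μ ξ hξ.1 hξ.2
    exact le_trans (ENNReal.rpow_le_rpow (iInf₂_le ξ' ⟨hf, hs⟩) hq.le) hle
  set KA := (⨅ ξ ∈ {ξ : Measure (E × E) |
      ξ.map Prod.fst = empiricalMeasure x ∧ ξ.map Prod.snd = μ},
    ∫⁻ q, ENNReal.ofReal (‖q.1 - q.2‖ ^ p) ∂ξ) ^ (1/p) with hKA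
  set KB := (⨅ ξ ∈ {ξ : Measure (E × E) |
      ξ.map Prod.fst = empiricalMeasure x' ∧ ξ.map Prod.snd = μ},
    ∫⁻ q, ENNReal.ofReal (‖q.1 - q.2‖ ^ p) ∂ξ) ^ (1/p) with hKB
  set D := ((n : ℝ≥0∞)⁻¹ * ∑ i, (edist (x i) (x' i)) ^ p) ^ (1/p) with hD
  have hWA : wassersteinDist p (empiricalMeasure x) μ = KA.toReal := rfl
  have hWB : wassersteinDist p (empiricalMeasure x') μ = KB.toReal := rfl
  have h₁ : KA ≤ D + KB := htri x x'
  have h₂ : KB ≤ D + KA := by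
    have hD' : ((n : ℝ≥0∞)⁻¹ * ∑ i, (edist (x' i) (x i)) ^ p) ^ (1/p) = D := by
      rw [hD]
      congr 2
      exact Finset.sum_congr rfl fun i _ => by rw [edist_comm]
    have := htri x' x
    rwa [hD'] at this
  have hDtop : D ≠ ⊤ := by
    rw [hD]
    refine (ENNReal.rpow_lt_top_of_nonneg hq.le ?_).ne
    refine ENNReal.mul_ne_top (ENNReal.inv_ne_top.2 (by exact_mod_cast hn.ne')) ?_
    exact (ENNReal.sum_lt_top.2 fun i _ =>
      ENNReal.rpow_lt_top_of_nonneg hp0.le (edist_ne_top _ _)).ne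
  have hDreal : D.toReal ≤ (n : ℝ) ^ (-(1 / max 2 p)) * Real.sqrt (∑ i, ‖x i - x' i‖ ^ 2) := by
    have hcalc : D.toReal = ((n:ℝ)⁻¹ * ∑ i, ‖x i - x' i‖ ^ p) ^ (1/p) := by
      rw [hD, ← ENNReal.toReal_rpow]
      congr 1
      rw [ENNReal.toReal_mul]
      congr 1
      · rw [ENNReal.toReal_inv]; simp
      · rw [ENNReal.toReal_sum (fun i _ =>
          (ENNReal.rpow_lt_top_of_nonneg hp0.le (edist_ne_top _ _)).ne)]
        refine Finset.sum_congr rfl fun i _ => ?_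
        rw [← ENNReal.toReal_rpow]
        congr 1
        rw [edist_dist, ENNReal.toReal_ofReal dist_nonneg, dist_eq_norm]
    rw [hcalc]
    exact real_bound p hp hn (fun i => ‖x i - x' i‖) (fun i => norm_nonneg _)
  rcases eq_or_ne KA ⊤ with hA | hA
  · have hB : KB = ⊤ := by
      by_contra hB
      exact (h₁.trans_lt (ENNReal.add_lt_top.2 ⟨hDtop.lt_top, Ne.lt_top hB⟩)).ne hA
    rw [hWA, hWB, hA, hB, ENNReal.toReal_top, sub_self, abs_zero]
    positivity
  · have hB : KB ≠ ⊤ :=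
      (h₂.trans_lt (ENNReal.add_lt_top.2 ⟨hDtop.lt_top, Ne.lt_top hA⟩)).ne
    have r₁ : KA.toReal ≤ D.toReal + KB.toReal := by
      have := ENNReal.toReal_mono (ENNReal.add_ne_top.2 ⟨hDtop, hB⟩) h₁
      rwa [ENNReal.toReal_add hDtop hB] at this
    have r₂ : KB.toReal ≤ D.toReal + KA.toReal := by
      have := ENNReal.toReal_mono (ENNReal.add_ne_top.2 ⟨hDtop, hA⟩) h₂
      rwa [ENNReal.toReal_add hDtop hA] at this
    rw [hWA, hWB]
    refine le_trans (abs_sub_le_iff.2 ⟨by linarith, by linarith⟩) hDreal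
end

section
/- Let B_0 = {x ∈ ℓ² : ∑_{m≥1} (γ^{m−1} x_m)² ≤ 1} for a constant γ > 1. Then for every ε ∈ (0,1], the ε-covering number of B_0 (in the ℓ² norm) satisfies log N_ε(B_0) ≥ (log(1/ε))²/(2 log γ). -/
open scoped ENNReal
open Finset MeasureTheory Metric

noncomputable def projE (J : ℕ) (x : lp (fun _ : ℕ => ℝ) 2) : EuclideanSpace ℝ (Fin J) :=
  WithLp.toLp 2 (fun i => x i)

lemma projE_lip (J : ℕ) (x y : lp (fun _ : ℕ => ℝ) 2) :
    dist (projE J x) (projE J y) ≤ dist x y := by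
  rw [EuclideanSpace.dist_eq, dist_eq_norm]
  have h2 : (0:ℝ) < (2 : ℝ≥0∞).toReal := by norm_num
  have h := lp.sum_rpow_le_norm_rpow h2 (x - y) (Finset.range J)
  have hss : ∑ i : Fin J, dist (projE J x i) (projE J y i) ^ 2
      = ∑ i ∈ Finset.range J, ‖(x - y) i‖ ^ ((2 : ℝ≥0∞).toReal) := by
    rw [Finset.sum_range fun i => ‖(x - y) i‖ ^ ((2 : ℝ≥0∞).toReal)]
    apply Finset.sum_congr rfl
    intro i _
    rw [ENNReal.toReal_ofNat, Real.rpow_two]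
    simp [projE, Real.dist_eq, lp.coeFn_sub, sq_abs]
  rw [hss]
  calc Real.sqrt (∑ i ∈ Finset.range J, ‖(x - y) i‖ ^ ((2 : ℝ≥0∞).toReal))
      ≤ Real.sqrt (‖x - y‖ ^ ((2 : ℝ≥0∞).toReal)) := Real.sqrt_le_sqrt h
    _ = ‖x - y‖ := by
        rw [ENNReal.toReal_ofNat, Real.rpow_two, Real.sqrt_sq (norm_nonneg _)]

noncomputable def extSeq (J : ℕ) (y : EuclideanSpace ℝ (Fin J)) : ℕ → ℝ :=
  fun n => if h : n < J then y ⟨n, h⟩ else 0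

lemma extSeq_memℓp (J : ℕ) (y : EuclideanSpace ℝ (Fin J)) : Memℓp (extSeq J y) 2 := by
  apply memℓp_gen
  apply summable_of_ne_finset_zero (s := Finset.range J)
  intro n hn
  simp only [Finset.mem_range, not_lt] at hn
  simp [extSeq, Nat.not_lt.mpr hn, Real.zero_rpow (by norm_num : (2:ℝ≥0∞).toReal ≠ 0)]

noncomputable def extLp (J : ℕ) (y : EuclideanSpace ℝ (Fin J)) : lp (fun _ : ℕ => ℝ) 2 :=
  ⟨extSeq J y, extSeq_memℓp J y⟩

lemma extLp_apply (J : ℕ) (y : EuclideanSpace ℝ (Fin J)) (n : ℕ) :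
    (extLp J y : ℕ → ℝ) n = extSeq J y n := rfl

lemma extLp_tsum_le (γ : ℝ) (J : ℕ) (y : EuclideanSpace ℝ (Fin J))
    (hy : ∑ i : Fin J, (γ ^ (i:ℕ) * y i) ^ 2 ≤ 1) :
    ∑' m : ℕ, ENNReal.ofReal ((γ ^ m * (extLp J y : ℕ → ℝ) m) ^ 2) ≤ 1 := by
  have hz : ∀ m ∉ Finset.range J,
      ENNReal.ofReal ((γ ^ m * (extLp J y : ℕ → ℝ) m) ^ 2) = 0 := by
    intro m hm
    simp only [Finset.mem_range, not_lt] at hm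
    simp [extLp_apply, extSeq, Nat.not_lt.mpr hm]
  rw [tsum_eq_sum hz]
  have : ∑ m ∈ Finset.range J, ENNReal.ofReal ((γ ^ m * (extLp J y : ℕ → ℝ) m) ^ 2)
      = ENNReal.ofReal (∑ m ∈ Finset.range J, (γ ^ m * (extLp J y : ℕ → ℝ) m) ^ 2) := by
    rw [ENNReal.ofReal_sum_of_nonneg (fun i _ => sq_nonneg _)]
  rw [this, ← ENNReal.ofReal_one]
  apply ENNReal.ofReal_le_ofReal
  refine le_trans (le_of_eq ?_) hy
  rw [← Fin.sum_univ_eq_sum_range (fun m => (γ ^ m * (extLp J y : ℕ → ℝ) m) ^ 2) J]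
  apply Finset.sum_congr rfl
  intro i _
  simp [extLp_apply, extSeq, i.isLt]

noncomputable def diagMap (γ : ℝ) (J : ℕ) :
    EuclideanSpace ℝ (Fin J) →ₗ[ℝ] EuclideanSpace ℝ (Fin J) where
  toFun z := WithLp.toLp 2 (fun i => γ ^ (i : ℕ) * z i)
  map_add' z w := by ext i; simp [mul_add]
  map_smul' c z := by ext i; simp; ring

lemma diagMap_apply (γ : ℝ) (J : ℕ) (z : EuclideanSpace ℝ (Fin J)) (i : Fin J) :
    diagMap γ J z i = γ ^ (i : ℕ) * z i := rfl

lemma mem_ellipsoid_iff (γ : ℝ) (J : ℕ) (z : EuclideanSpace ℝ (Fin J)) :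
    z ∈ (diagMap γ J) ⁻¹' closedBall 0 1 ↔ ∑ i : Fin J, (γ ^ (i:ℕ) * z i) ^ 2 ≤ 1 := by
  simp only [Set.mem_preimage, mem_closedBall, dist_zero_right, EuclideanSpace.norm_eq]
  rw [Real.sqrt_le_one]
  have hsum : ∑ i : Fin J, ‖diagMap γ J z i‖ ^ 2 = ∑ i : Fin J, (γ ^ (i:ℕ) * z i) ^ 2 :=
    Finset.sum_congr rfl fun i _ => by rw [diagMap_apply, Real.norm_eq_abs, sq_abs]
  rw [hsum]

lemma diagMap_det (γ : ℝ) (J : ℕ) :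
    LinearMap.det (diagMap γ J) = γ ^ (∑ i ∈ Finset.range J, i) := by
  classical
  let b := PiLp.basisFun 2 ℝ (Fin J)
  have hM : LinearMap.toMatrix b b (diagMap γ J)
      = Matrix.diagonal (fun i : Fin J => γ ^ (i:ℕ)) := by
    ext i j
    rw [LinearMap.toMatrix_apply]
    by_cases h : i = j
    · subst h
      simp [diagMap, b, Matrix.diagonal, PiLp.basisFun_apply, PiLp.basisFun_repr]
    · simp [diagMap, b, Matrix.diagonal, PiLp.basisFun_apply, PiLp.basisFun_repr, h,
        Pi.single_apply, Ne.symm h]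
  rw [← LinearMap.det_toMatrix b, hM, Matrix.det_diagonal, Finset.prod_pow_eq_pow_sum]
  exact congrArg (γ ^ ·) (Fin.sum_univ_eq_sum_range (fun i => i) J)

lemma ellipsoid_volume (γ : ℝ) (hγ : 1 < γ) (J : ℕ) :
    volume ((diagMap γ J) ⁻¹' closedBall 0 1)
      = ENNReal.ofReal ((γ ^ (∑ i ∈ Finset.range J, i))⁻¹)
        * volume (ball (0 : EuclideanSpace ℝ (Fin J)) 1) := by
  have hγ0 : (0:ℝ) < γ := lt_trans one_pos hγ
  have hdet : LinearMap.det (diagMap γ J) ≠ 0 := by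
    rw [diagMap_det]; positivity
  rw [MeasureTheory.Measure.addHaar_preimage_linearMap volume hdet,
    MeasureTheory.Measure.addHaar_closedBall volume 0 (zero_le_one), one_pow,
    ENNReal.ofReal_one, one_mul, diagMap_det, abs_of_nonneg (by positivity)]

/-- metric entropy lower bound for an exponential ellipsoid in ℓ²:
let `B₀ = {x ∈ ℓ² : ∑_{m≥0} (γ^m x_m)² ≤ 1}` (semi-axes `τ_m = γ^{−m}`, i.e.
`γ^{−(m−1)}` when indexing from `m = 1`) with `γ > 1`.  Then any covering of `B₀`
by `N` closed balls of radius `ε ∈ (0,1]` with centers in `B₀` satisfies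
`log N ≥ (log(1/ε))² / (2 log γ)`. -/
theorem ellipsoid_entropy_lower_bound
    (γ : ℝ) (hγ : 1 < γ) (ε : ℝ) (hε0 : 0 < ε) (hε1 : ε ≤ 1)
    (B₀ : Set (lp (fun _ : ℕ => ℝ) 2))
    (hB₀ : B₀ = {x : lp (fun _ : ℕ => ℝ) 2 |
      ∑' m : ℕ, ENNReal.ofReal ((γ ^ m * x m) ^ 2) ≤ 1})
    (s : Finset (lp (fun _ : ℕ => ℝ) 2)) (hs : ↑s ⊆ B₀)
    (hcover : B₀ ⊆ ⋃ y ∈ s, Metric.closedBall y ε) :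
    (Real.log (1 / ε)) ^ 2 / (2 * Real.log γ) ≤ Real.log s.card := by
  classical
  have hγ0 : (0:ℝ) < γ := lt_trans one_pos hγ
  set t : ℝ := Real.log γ with ht_def
  have ht : 0 < t := Real.log_pos hγ
  set L : ℝ := Real.log (1 / ε) with hL_def
  have hL : 0 ≤ L := Real.log_nonneg (by rw [le_div_iff₀ hε0]; linarith)
  have hLeps : L = -Real.log ε := by rw [hL_def, one_div, Real.log_inv]
  set J : ℕ := ⌈L / t⌉₊ with hJ_def
  set c : ℕ := ∑ i ∈ Finset.range J, i with hc_def
  -- s is nonempty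
  have h0mem : (0 : lp (fun _ : ℕ => ℝ) 2) ∈ B₀ := by
    rw [hB₀]
    simp only [Set.mem_setOf_eq, lp.coeFn_zero, Pi.zero_apply, mul_zero]
    simp
  have hsne : s.Nonempty := by
    obtain ⟨_, hy⟩ := Set.mem_iUnion.mp (hcover h0mem)
    obtain ⟨hy1, _⟩ := Set.mem_iUnion.mp hy
    exact ⟨_, hy1⟩
  have hN1 : 1 ≤ s.card := Finset.card_pos.mpr hsne
  have hNR : (1:ℝ) ≤ s.card := by exact_mod_cast hN1
  -- the finite-dimensional ellipsoid is covered by the projected balls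
  have hsub : (diagMap γ J) ⁻¹' closedBall 0 1
      ⊆ ⋃ y ∈ s, closedBall (projE J y) ε := by
    intro z hz
    rw [mem_ellipsoid_iff] at hz
    have hxB : extLp J z ∈ B₀ := by
      rw [hB₀]; exact extLp_tsum_le γ J z hz
    obtain ⟨y, hy⟩ := Set.mem_iUnion.mp (hcover hxB)
    obtain ⟨hy1, hy2⟩ := Set.mem_iUnion.mp hy
    refine Set.mem_iUnion.mpr ⟨y, Set.mem_iUnion.mpr ⟨hy1, ?_⟩⟩
    have hproj : projE J (extLp J z) = z := by
      ext i
      simp [projE, extLp_apply, extSeq, i.isLt]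
    rw [mem_closedBall] at hy2 ⊢
    calc dist z (projE J y) = dist (projE J (extLp J z)) (projE J y) := by rw [hproj]
      _ ≤ dist (extLp J z) y := projE_lip J _ y
      _ ≤ ε := hy2
  -- volume comparison
  set Vb : ℝ≥0∞ := volume (ball (0 : EuclideanSpace ℝ (Fin J)) 1) with hVb_def
  have hVb0 : Vb ≠ 0 := (measure_ball_pos volume 0 one_pos).ne'
  have hVbtop : Vb ≠ ⊤ := measure_ball_lt_top.ne
  have hvol : ENNReal.ofReal ((γ ^ c)⁻¹) * Vb
      ≤ ((s.card : ℝ≥0∞) * ENNReal.ofReal (ε ^ J)) * Vb := by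
    rw [← ellipsoid_volume γ hγ J]
    calc volume ((diagMap γ J) ⁻¹' closedBall 0 1)
        ≤ volume (⋃ y ∈ s, closedBall (projE J y) ε) := measure_mono hsub
      _ ≤ ∑ y ∈ s, volume (closedBall (projE J y) ε) := measure_biUnion_finset_le s _
      _ = ((s.card : ℝ≥0∞) * ENNReal.ofReal (ε ^ J)) * Vb := by
          rw [Finset.sum_congr rfl (fun y _ =>
            MeasureTheory.Measure.addHaar_closedBall volume (projE J y) hε0.le)]
          rw [Finset.sum_const, finrank_euclideanSpace_fin, nsmul_eq_mul, mul_assoc]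
  have hreal : (γ ^ c)⁻¹ ≤ (s.card : ℝ) * ε ^ J := by
    have h1 : ENNReal.ofReal ((γ ^ c)⁻¹)
        ≤ (s.card : ℝ≥0∞) * ENNReal.ofReal (ε ^ J) :=
      (ENNReal.mul_le_mul_iff_left hVb0 hVbtop).mp hvol
    rw [← ENNReal.ofReal_natCast, ← ENNReal.ofReal_mul (Nat.cast_nonneg _)] at h1
    exact (ENNReal.ofReal_le_ofReal_iff (mul_nonneg (Nat.cast_nonneg _) (pow_nonneg hε0.le J))).mp h1
  -- take logarithms
  have hlog : -(c * t) ≤ Real.log s.card + J * Real.log ε := by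
    have hNpos : (0:ℝ) < (s.card : ℝ) := lt_of_lt_of_le one_pos hNR
    have hγc : (0:ℝ) < (γ ^ c)⁻¹ := inv_pos.mpr (pow_pos hγ0 c)
    have h2 := Real.log_le_log hγc hreal
    rw [Real.log_inv, Real.log_pow, Real.log_mul hNpos.ne' (pow_pos hε0 J).ne',
      Real.log_pow] at h2
    exact_mod_cast h2
  have hlogN : (J : ℝ) * L - (c : ℝ) * t ≤ Real.log s.card := by
    rw [hLeps]; linarith
  -- arithmetic
  have ha1 : L / t ≤ (J : ℝ) := Nat.le_ceil _
  have ha2 : (J : ℝ) < L / t + 1 := Nat.ceil_lt_add_one (by positivity)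
  have hc2 : (c : ℝ) * 2 = (J : ℝ) * ((J : ℝ) - 1) := by
    rcases Nat.eq_zero_or_pos J with hJ0 | hJpos
    · simp [hc_def, hJ0]
    · have := Finset.sum_range_id_mul_two J
      have hcast : ((∑ i ∈ Finset.range J, i) * 2 : ℕ) = (J * (J - 1) : ℕ) := this
      have : ((J : ℝ) - 1) = ((J - 1 : ℕ) : ℝ) := by
        rw [Nat.cast_sub hJpos]; simp
      rw [this, hc_def]
      exact_mod_cast hcast
  have ha : (L / t) * t = L := div_mul_cancel₀ L ht.ne'
  have hkey : L ^ 2 / (2 * t) ≤ (J : ℝ) * L - (c : ℝ) * t := by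
    have hfinal : L ^ 2 / (2 * t) = (L / t) * L / 2 := by
      field_simp
    rw [hfinal]
    nlinarith [mul_nonneg (sub_nonneg.mpr ha1) (sub_nonneg.mpr (le_of_lt ha2)),
      mul_nonneg (div_nonneg hL ht.le) hL, ht, ha,
      mul_nonneg (mul_nonneg (sub_nonneg.mpr ha1) (sub_nonneg.mpr (le_of_lt ha2))) ht.le]
  exact le_trans hkey hlogN
end
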